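/- Linearization of the Weil representation: let (π, H) be an irreducible complex representation of the Heisenberg group H(V,ω) with central character ψ. Then there exists a group homomorphism ρ : Sp(V,ω) → GL(H) satisfying the Egorov identity ρ(g) π(v,z) ρ(g)⁻¹ = π(gv, z) for every g ∈ Sp(V,ω) and (v,z) ∈ H(V,ω). -/

import Mathlib

/-!
Linearization of the Weil representation: for an irreducible complex representation
`(π, H)` of the Heisenberg group `H(V,ω)` with central character `ψ`, there exists a
group homomorphism `ρ : Sp(V,ω) → GL(H)` satisfying the Egorov identity
`ρ(g) π(v,z) ρ(g)⁻¹ = π(gv, z)`.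
-/

noncomputable section
set_option linter.unusedSectionVars false

namespace KRSup

variable (F V : Type) [Field F] [Fintype F] [AddCommGroup V] [Module F V]

/-- Heisenberg group multiplication on `H = V × F`:
`(v,z)·(v',z') = (v+v', z+z'+½ω(v,v'))`. -/
def hMul (ω : LinearMap.BilinForm F V) (h h' : V × F) : V × F :=
  (h.1 + h'.1, h.2 + h'.2 + (2 : F)⁻¹ * ω h.1 h'.1)

/-- An irreducible finite-dimensional complex representation of the Heisenberg group
`H(V,ω)` with central character `ψ`. -/
structure HeisenbergRep (ω : LinearMap.BilinForm F V) (ψ : AddChar F ℂ) where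
  /-- the underlying complex vector space -/
  carrier : Type
  [acg : AddCommGroup carrier]
  [mod : Module ℂ carrier]
  [fd : FiniteDimensional ℂ carrier]
  /-- the action of the Heisenberg group -/
  π : V × F → (carrier →ₗ[ℂ] carrier)
  π_mul : ∀ h h' : V × F, π (hMul F V ω h h') = (π h).comp (π h')
  π_one : π ((0 : V), (0 : F)) = LinearMap.id
  nontriv : ∃ w : carrier, w ≠ 0
  /-- the restriction to the center `Z(H) = {(0,z)}` acts by the character `ψ` -/
  central : ∀ z : F, π ((0 : V), z) = ψ z • LinearMap.id
  /-- irreducibility: no nontrivial invariant subspaces -/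
  irred : ∀ U : Submodule ℂ carrier, (∀ h : V × F, ∀ w ∈ U, π h w ∈ U) → U = ⊥ ∨ U = ⊤

attribute [instance] HeisenbergRep.acg HeisenbergRep.mod HeisenbergRep.fd

/-- The symplectic group `Sp(V,ω)` of linear automorphisms preserving `ω`. -/
def Symp (ω : LinearMap.BilinForm F V) : Subgroup (V ≃ₗ[F] V) where
  carrier := {g | ∀ u v : V, ω (g u) (g v) = ω u v}
  mul_mem' := by
    intro g h hg hh u v
    simpa using (hg (h u) (h v)).trans (hh u v)
  one_mem' := by intro u v; rfl
  inv_mem' := by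
    intro g hg u v
    conv_rhs => rw [← g.apply_symm_apply u, ← g.apply_symm_apply v, hg]
    rfl

/-! ### development -/
section Weil

variable {F V : Type} [Field F] [Fintype F] [AddCommGroup V] [Module F V]
  [FiniteDimensional F V]
variable {ω : LinearMap.BilinForm F V} {ψ : AddChar F ℂ}

lemma psi_ne_zero (a : F) : ψ a ≠ 0 := by
  intro h
  have h1 : ψ a * ψ (-a) = 1 := by
    rw [← AddChar.map_add_eq_mul, add_neg_cancel, AddChar.map_zero_eq_one]
  rw [h, zero_mul] at h1
  exact zero_ne_one h1

lemma exists_psi_ne_one (hψ : ψ ≠ 1) : ∃ c : F, ψ c ≠ 1 :=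
  AddChar.ne_one_iff.mp hψ

lemma omega_skew (halt : ∀ v : V, ω v v = 0) (u v : V) : ω u v = - ω v u := by
  have h := halt (u + v)
  simp only [map_add, LinearMap.add_apply] at h
  rw [halt u, halt v] at h
  linear_combination h

section PiCalc
variable (P : HeisenbergRep F V ω ψ)

lemma pi_pair (v : V) (z : F) : P.π (v, z) = ψ z • P.π (v, 0) := by
  have h : hMul F V ω ((0 : V), z) (v, 0) = (v, z) := by
    simp [hMul]
  calc P.π (v, z) = P.π (hMul F V ω ((0 : V), z) (v, 0)) := by rw [h]
    _ = (P.π ((0:V), z)).comp (P.π (v, 0)) := P.π_mul _ _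
    _ = ψ z • P.π (v, 0) := by rw [P.central]; ext x; simp

lemma pi_comp (v w : V) :
    (P.π (v, 0)).comp (P.π (w, 0)) = ψ ((2:F)⁻¹ * ω v w) • P.π (v + w, 0) := by
  have h : hMul F V ω (v, (0:F)) (w, 0) = (v + w, (2:F)⁻¹ * ω v w) := by
    simp [hMul]
  rw [← P.π_mul, h, pi_pair]

lemma pi_neg (halt : ∀ v : V, ω v v = 0) (v : V) :
    (P.π (v, 0)).comp (P.π (-v, 0)) = LinearMap.id := by
  rw [pi_comp]
  have h1 : ω v (-v) = 0 := by rw [map_neg, halt, neg_zero]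
  rw [h1, mul_zero, AddChar.map_zero_eq_one, add_neg_cancel, P.π_one, one_smul]

lemma pi_bij (halt : ∀ v : V, ω v v = 0) (v : V) :
    Function.Bijective (P.π (v, 0)) := by
  constructor
  · apply Function.LeftInverse.injective (g := P.π (-v, 0))
    intro x
    have := congrArg (fun f => f x) (pi_neg P halt (-v))
    simpa [neg_neg] using this
  · apply Function.RightInverse.surjective (g := P.π (-v, 0))
    intro x
    have := congrArg (fun f => f x) (pi_neg P halt v)
    simpa using this

lemma pi_nontrivial : Nontrivial P.carrier := by
  obtain ⟨w, hw⟩ := P.nontriv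
  exact nontrivial_of_ne w 0 hw

lemma pi_comp_mul (v w : V) :
    P.π (v, 0) * P.π (w, 0) = ψ ((2:F)⁻¹ * ω v w) • P.π (v + w, 0) := by
  rw [Module.End.mul_eq_comp]; exact pi_comp P v w

lemma pi_neg_mul (halt : ∀ v : V, ω v v = 0) (v : V) :
    P.π (v, 0) * P.π (-v, 0) = 1 := by
  rw [Module.End.mul_eq_comp, pi_neg P halt v]; rfl

lemma pi_neg_mul' (halt : ∀ v : V, ω v v = 0) (v : V) :
    P.π (-v, 0) * P.π (v, 0) = 1 := by
  have := pi_neg_mul P halt (-v)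
  rwa [neg_neg] at this

lemma two_nz (hq : Odd (Fintype.card F)) : (2:F) ≠ 0 := by
  intro h20
  have h2n : ((2:ℕ) : F) = 0 := by exact_mod_cast h20
  have hchar : ringChar F = 2 := CharP.ringChar_of_prime_eq_zero Nat.prime_two h2n
  haveI : CharP F (ringChar F) := ringChar.charP F
  obtain ⟨m, hm, hcard⟩ := FiniteField.card F (ringChar F)
  rw [hchar] at hcard
  rw [hcard] at hq
  have : Even (2 ^ (m:ℕ)) := Nat.even_pow.mpr ⟨even_two, m.pos.ne'⟩
  exact (Nat.not_even_iff_odd.mpr hq) this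

/-- conjugation identity -/
lemma pi_conj (hq : Odd (Fintype.card F)) (halt : ∀ v : V, ω v v = 0) (u v : V) :
    P.π (u, 0) * P.π (v, 0) * P.π (-u, 0) = ψ (ω u v) • P.π (v, 0) := by
  have h2 : (2:F) ≠ 0 := two_nz hq
  rw [mul_assoc, pi_comp_mul, mul_smul_comm, pi_comp_mul]
  have e3 : u + (v + -u) = v := by abel
  rw [e3, smul_smul, ← AddChar.map_add_eq_mul]
  congr 2
  have h1 : ω u (v + -u) = ω u v := by
    rw [map_add, map_neg, halt u, neg_zero, add_zero]
  have hvu : ω v (-u) = ω u v := by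
    rw [map_neg, omega_skew halt v u]; ring
  rw [h1, hvu]
  field_simp
  ring

lemma trace_pi_zero (hq : Odd (Fintype.card F)) (halt : ∀ v : V, ω v v = 0)
    (hnd : ∀ v : V, (∀ u : V, ω v u = 0) → v = 0) (hψ : ψ ≠ 1)
    {v : V} (hv : v ≠ 0) :
    LinearMap.trace ℂ P.carrier (P.π (v, 0)) = 0 := by
  obtain ⟨c, hc⟩ := exists_psi_ne_one hψ
  have hex : ∃ u0 : V, ω u0 v ≠ 0 := by
    by_contra hcon
    push_neg at hcon
    exact hv (hnd v (fun u => by rw [omega_skew halt, hcon u, neg_zero]))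
  obtain ⟨u0, hu0⟩ := hex
  set u : V := (c / ω u0 v) • u0 with hu
  have huv : ω u v = c := by
    rw [hu]
    simp only [map_smul, LinearMap.smul_apply, smul_eq_mul]
    field_simp
  have key := pi_conj P hq halt u v
  have htr := congrArg (LinearMap.trace ℂ P.carrier) key
  rw [map_smul] at htr
  rw [mul_assoc, LinearMap.trace_mul_comm, mul_assoc, pi_neg_mul' P halt u, mul_one] at htr
  rw [huv] at htr
  have : (1 - ψ c) * LinearMap.trace ℂ P.carrier (P.π (v, 0)) = 0 := by
    rw [sub_mul, one_mul]
    rw [smul_eq_mul] at htr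
    linear_combination htr
  rcases mul_eq_zero.mp this with h | h
  · exact absurd (by linear_combination -h) hc
  · exact h

/-- Existence of a vacuum vector for an isotropic subspace. -/
lemma exists_vac (hq : Odd (Fintype.card F)) (halt : ∀ v : V, ω v v = 0)
    (hnd : ∀ v : V, (∀ u : V, ω v u = 0) → v = 0) (hψ : ψ ≠ 1)
    (L' : Submodule F V) (hL' : ∀ x ∈ L', ∀ y ∈ L', ω x y = 0) :
    ∃ w : P.carrier, w ≠ 0 ∧ ∀ l ∈ L', P.π (l, 0) w = w := by
  haveI : Finite V := Module.finite_of_finite F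
  haveI : Fintype ↥L' := Fintype.ofFinite _
  haveI : Nontrivial P.carrier := pi_nontrivial P
  set P0 : P.carrier →ₗ[ℂ] P.carrier :=
    (Fintype.card ↥L' : ℂ)⁻¹ • ∑ l : ↥L', P.π ((l : V), 0) with hP0
  have habs : ∀ l' ∈ L', P.π (l', 0) * P0 = P0 := by
    intro l' hl'
    rw [hP0, mul_smul_comm, Finset.mul_sum]
    congr 1
    have : ∀ l : ↥L', P.π (l', 0) * P.π ((l : V), 0) = P.π (((⟨l', hl'⟩ + l : ↥L') : V), 0) := by
      intro l
      rw [pi_comp_mul, hL' l' hl' (l : V) l.2, mul_zero, AddChar.map_zero_eq_one, one_smul]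
      rfl
    rw [Finset.sum_congr rfl (fun l _ => this l)]
    exact Fintype.sum_equiv (Equiv.addLeft (⟨l', hl'⟩ : ↥L')) _ _ (fun l => rfl)
  have htr : LinearMap.trace ℂ P.carrier P0 ≠ 0 := by
    rw [hP0, map_smul, map_sum]
    have hsum : ∑ l : ↥L', LinearMap.trace ℂ P.carrier (P.π ((l : V), 0))
        = (Module.finrank ℂ P.carrier : ℂ) := by
      rw [Fintype.sum_eq_single (0 : ↥L')]
      · have : ((0 : ↥L') : V) = 0 := rfl
        rw [this, P.π_one, LinearMap.trace_id]
      · intro l hl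
        apply trace_pi_zero P hq halt hnd hψ
        exact fun h => hl (Subtype.ext h)
    rw [hsum]
    have h1 : (Fintype.card ↥L' : ℂ) ≠ 0 := by
      exact_mod_cast Fintype.card_ne_zero
    have h2 : (Module.finrank ℂ P.carrier : ℂ) ≠ 0 := by
      have := Module.finrank_pos (R := ℂ) (M := P.carrier)
      exact_mod_cast this.ne'
    simp only [smul_eq_mul]
    exact mul_ne_zero (inv_ne_zero h1) h2
  have hP0ne : P0 ≠ 0 := by
    intro h
    rw [h, map_zero] at htr
    exact htr rfl
  obtain ⟨x, hx⟩ := DFunLike.ne_iff.mp hP0ne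
  refine ⟨P0 x, by simpa using hx, ?_⟩
  intro l hl
  have := congrArg (fun f => f x) (habs l hl)
  simpa only [Module.End.mul_apply] using this

lemma psi_neg (a : F) : ψ (-a) = (ψ a)⁻¹ := by
  have h1 : ψ (-a) * ψ a = 1 := by
    rw [← AddChar.map_add_eq_mul, neg_add_cancel, AddChar.map_zero_eq_one]
  exact eq_inv_of_mul_eq_one_left h1

open scoped Classical in
/-- choice of vacuum vector -/
def vacOf (L' : Submodule F V) : P.carrier :=
  if h : ∃ w : P.carrier, w ≠ 0 ∧ ∀ l ∈ L', P.π (l, 0) w = w then h.choose else 0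

lemma vacOf_spec (hq : Odd (Fintype.card F)) (halt : ∀ v : V, ω v v = 0)
    (hnd : ∀ v : V, (∀ u : V, ω v u = 0) → v = 0) (hψ : ψ ≠ 1)
    (L' : Submodule F V) (hL' : ∀ x ∈ L', ∀ y ∈ L', ω x y = 0) :
    vacOf P L' ≠ 0 ∧ ∀ l ∈ L', P.π (l, 0) (vacOf P L') = vacOf P L' := by
  have h := exists_vac P hq halt hnd hψ L' hL'
  classical
  rw [vacOf]
  rw [dif_pos h]
  exact h.choose_spec

/-- the `e`-vectors of the model attached to an isotropic subspace -/
def eVec (L' : Submodule F V) (v : V) : P.carrier := P.π (v, 0) (vacOf P L')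

lemma pi_eVec (L' : Submodule F V) (w v : V) (z : F) :
    P.π (w, z) (eVec P L' v) = ψ (z + (2:F)⁻¹ * ω w v) • eVec P L' (w + v) := by
  have hcomp : P.π (w, z) * P.π (v, 0) = ψ (z + (2:F)⁻¹ * ω w v) • P.π (w + v, 0) := by
    rw [pi_pair P w z, smul_mul_assoc, pi_comp_mul P w v, smul_smul, ← AddChar.map_add_eq_mul]
  have := congrArg (fun f => f (vacOf P L')) hcomp
  simp only [Module.End.mul_apply, LinearMap.smul_apply] at this
  exact this

lemma eVec_shift (hq : Odd (Fintype.card F)) (halt : ∀ v : V, ω v v = 0)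
    (hnd : ∀ v : V, (∀ u : V, ω v u = 0) → v = 0) (hψ : ψ ≠ 1)
    (L' : Submodule F V) (hL' : ∀ x ∈ L', ∀ y ∈ L', ω x y = 0)
    (v : V) {l : V} (hl : l ∈ L') :
    eVec P L' (v + l) = ψ ((2:F)⁻¹ * ω l v) • eVec P L' v := by
  have hvac := (vacOf_spec P hq halt hnd hψ L' hL').2 l hl
  have h1 := congrArg (fun f => f (vacOf P L')) (pi_comp_mul P v l)
  simp only [Module.End.mul_apply, LinearMap.smul_apply] at h1
  rw [hvac] at h1
  -- h1 : π(v,0) vac = ψ (½ ω v l) • π(v+l,0) vac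
  show P.π (v + l, 0) (vacOf P L') = ψ ((2:F)⁻¹ * ω l v) • P.π (v, 0) (vacOf P L')
  rw [h1, smul_smul, ← AddChar.map_add_eq_mul]
  have hz : (2:F)⁻¹ * ω l v + (2:F)⁻¹ * ω v l = 0 := by
    rw [omega_skew halt l v]; ring
  rw [hz, AddChar.map_zero_eq_one, one_smul]

lemma eVec_eigen (hq : Odd (Fintype.card F)) (halt : ∀ v : V, ω v v = 0)
    (hnd : ∀ v : V, (∀ u : V, ω v u = 0) → v = 0) (hψ : ψ ≠ 1)
    (L' : Submodule F V) (hL' : ∀ x ∈ L', ∀ y ∈ L', ω x y = 0)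
    (v : V) {l : V} (hl : l ∈ L') (z : F) :
    P.π (l, z) (eVec P L' v) = ψ (z + ω l v) • eVec P L' v := by
  rw [pi_eVec, add_comm l v, eVec_shift P hq halt hnd hψ L' hL' v hl, smul_smul,
    ← AddChar.map_add_eq_mul]
  congr 2
  have h2 : (2:F) ≠ 0 := two_nz hq
  have hhalf : (2:F)⁻¹ * ω l v + (2:F)⁻¹ * ω l v = ω l v := by
    field_simp
    ring
  rw [add_assoc, hhalf]

lemma eVec_ne (hq : Odd (Fintype.card F)) (halt : ∀ v : V, ω v v = 0)
    (hnd : ∀ v : V, (∀ u : V, ω v u = 0) → v = 0) (hψ : ψ ≠ 1)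
    (L' : Submodule F V) (hL' : ∀ x ∈ L', ∀ y ∈ L', ω x y = 0) (v : V) :
    eVec P L' v ≠ 0 := by
  have hvac := (vacOf_spec P hq halt hnd hψ L' hL').1
  intro h
  apply hvac
  have hinj := (pi_bij P halt v).1
  apply hinj
  rw [show P.π (v,0) (vacOf P L') = eVec P L' v from rfl, h, map_zero]

lemma eVec_span (hq : Odd (Fintype.card F)) (halt : ∀ v : V, ω v v = 0)
    (hnd : ∀ v : V, (∀ u : V, ω v u = 0) → v = 0) (hψ : ψ ≠ 1)
    (L' : Submodule F V) (hL' : ∀ x ∈ L', ∀ y ∈ L', ω x y = 0) :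
    Submodule.span ℂ (Set.range (eVec P L')) = ⊤ := by
  have hinv : ∀ h : V × F, ∀ x ∈ Submodule.span ℂ (Set.range (eVec P L')),
      P.π h x ∈ Submodule.span ℂ (Set.range (eVec P L')) := by
    rintro ⟨w, z⟩ x hx
    induction hx using Submodule.span_induction with
    | mem y hy =>
      obtain ⟨v, rfl⟩ := hy
      rw [pi_eVec]
      exact Submodule.smul_mem _ _ (Submodule.subset_span ⟨w + v, rfl⟩)
    | zero => rw [map_zero]; exact Submodule.zero_mem _
    | add a b _ _ ha hb => rw [map_add]; exact Submodule.add_mem _ ha hb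
    | smul c a _ ha => rw [map_smul]; exact Submodule.smul_mem _ _ ha
  rcases P.irred _ hinv with h | h
  · exfalso
    have h0 : eVec P L' 0 ∈ Submodule.span ℂ (Set.range (eVec P L')) :=
      Submodule.subset_span ⟨0, rfl⟩
    rw [h, Submodule.mem_bot] at h0
    exact eVec_ne P hq halt hnd hψ L' hL' 0 h0
  · exact h

section Lag
variable (L : Submodule F V)

lemma mk_out_eq (x : V ⧸ L) : Submodule.Quotient.mk (Quotient.out x) = x :=
  Quotient.out_eq x

lemma sub_out_mem (v : V) :
    v - Quotient.out (Submodule.Quotient.mk v : V ⧸ L) ∈ L := by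
  rw [← Submodule.Quotient.eq]
  exact (mk_out_eq L (Submodule.Quotient.mk v)).symm

lemma char_sum [Fintype ↥L] (halt : ∀ v : V, ω v v = 0) (hψ : ψ ≠ 1)
    (hL2 : ∀ v, (∀ x ∈ L, ω x v = 0) → v ∈ L)
    {u : V} (hu : u ∉ L) : ∑ l : ↥L, ψ (ω l u) = 0 := by
  have hex : ∃ x0 ∈ L, ω x0 u ≠ 0 := by
    by_contra hcon
    push_neg at hcon
    exact hu (hL2 u hcon)
  obtain ⟨x0, hx0L, hx0⟩ := hex
  obtain ⟨c, hc⟩ := exists_psi_ne_one hψ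
  have hl0L : (c / ω x0 u) • x0 ∈ L := L.smul_mem _ hx0L
  have hl0 : ω ((c / ω x0 u) • x0) u = c := by
    simp only [map_smul, LinearMap.smul_apply, smul_eq_mul]
    field_simp
  have key : ψ c * ∑ l : ↥L, ψ (ω l u) = ∑ l : ↥L, ψ (ω l u) := by
    rw [Finset.mul_sum]
    have h1 : ∀ l : ↥L, ψ c * ψ (ω l u) = ψ (ω (((⟨_, hl0L⟩ : ↥L) + l : ↥L) : V) u) := by
      intro l
      rw [← AddChar.map_add_eq_mul]
      congr 1
      have hcoe : (((⟨_, hl0L⟩ : ↥L) + l : ↥L) : V) = (c / ω x0 u) • x0 + (l : V) := rfl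
      rw [hcoe, map_add, LinearMap.add_apply, hl0]
    rw [Finset.sum_congr rfl (fun l _ => h1 l)]
    exact Fintype.sum_equiv (Equiv.addLeft (⟨_, hl0L⟩ : ↥L)) _ _ (fun l => rfl)
  have h0 : (ψ c - 1) * ∑ l : ↥L, ψ (ω l u) = 0 := by
    rw [sub_mul, one_mul, key, sub_self]
  rcases mul_eq_zero.mp h0 with h | h
  · exact absurd (by linear_combination h) hc
  · exact h

lemma eVec_decomp (hq : Odd (Fintype.card F)) (halt : ∀ v : V, ω v v = 0)
    (hnd : ∀ v : V, (∀ u : V, ω v u = 0) → v = 0) (hψ : ψ ≠ 1)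
    (hL1 : ∀ x ∈ L, ∀ y ∈ L, ω x y = 0) (v : V) :
    eVec P L v = ψ ((2:F)⁻¹ *
        ω (v - Quotient.out (Submodule.Quotient.mk v : V ⧸ L))
          (Quotient.out (Submodule.Quotient.mk v : V ⧸ L))) •
      eVec P L (Quotient.out (Submodule.Quotient.mk v : V ⧸ L)) := by
  set r := Quotient.out (Submodule.Quotient.mk v : V ⧸ L) with hr
  have hl : v - r ∈ L := sub_out_mem L v
  have hv : v = r + (v - r) := by abel
  calc eVec P L v = eVec P L (r + (v - r)) := by rw [← hv]
    _ = _ := eVec_shift P hq halt hnd hψ L hL1 r hl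

open scoped Classical in
lemma eVec_proj [Fintype ↥L] (hq : Odd (Fintype.card F)) (halt : ∀ v : V, ω v v = 0)
    (hnd : ∀ v : V, (∀ u : V, ω v u = 0) → v = 0) (hψ : ψ ≠ 1)
    (hL1 : ∀ x ∈ L, ∀ y ∈ L, ω x y = 0)
    (hL2 : ∀ v, (∀ x ∈ L, ω x v = 0) → v ∈ L) (u v : V) :
    ((Fintype.card ↥L : ℂ)⁻¹ • ∑ l : ↥L, (ψ (ω l u))⁻¹ • P.π ((l : V), 0)) (eVec P L v)
      = if (Submodule.Quotient.mk v : V ⧸ L) = Submodule.Quotient.mk u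
        then eVec P L v else 0 := by
  have hterm : ∀ l : ↥L, ((ψ (ω l u))⁻¹ • P.π ((l : V), 0)) (eVec P L v)
      = ψ (ω l (v - u)) • eVec P L v := by
    intro l
    rw [LinearMap.smul_apply, eVec_eigen P hq halt hnd hψ L hL1 v l.2, zero_add,
      smul_smul]
    congr 1
    rw [← psi_neg, ← AddChar.map_add_eq_mul]
    congr 1
    rw [map_sub]
    ring
  rw [LinearMap.smul_apply, LinearMap.sum_apply,
    Finset.sum_congr rfl (fun l _ => hterm l), ← Finset.sum_smul, smul_smul]
  by_cases hmem : v - u ∈ L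
  · have h1 : ∀ l : ↥L, ψ (ω l (v - u)) = 1 := by
      intro l
      rw [hL1 _ l.2 _ hmem, AddChar.map_zero_eq_one]
    have hcond : (Submodule.Quotient.mk v : V ⧸ L) = Submodule.Quotient.mk u :=
      (Submodule.Quotient.eq L).mpr hmem
    rw [Finset.sum_congr rfl (fun l _ => h1 l)]
    simp only [Finset.sum_const, Finset.card_univ, nsmul_eq_mul, mul_one]
    rw [if_pos hcond]
    rw [inv_mul_cancel₀ (by exact_mod_cast Fintype.card_ne_zero), one_smul]
  · have hcond : ¬ ((Submodule.Quotient.mk v : V ⧸ L) = Submodule.Quotient.mk u) :=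
      fun h => hmem ((Submodule.Quotient.eq L).mp h)
    rw [char_sum L halt hψ hL2 hmem]
    rw [if_neg hcond, mul_zero, zero_smul]

lemma eVec_indep [Fintype ↥L] (hq : Odd (Fintype.card F)) (halt : ∀ v : V, ω v v = 0)
    (hnd : ∀ v : V, (∀ u : V, ω v u = 0) → v = 0) (hψ : ψ ≠ 1)
    (hL1 : ∀ x ∈ L, ∀ y ∈ L, ω x y = 0)
    (hL2 : ∀ v, (∀ x ∈ L, ω x v = 0) → v ∈ L) :
    LinearIndependent ℂ (fun x : V ⧸ L => eVec P L (Quotient.out x)) := by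
  classical
  rw [linearIndependent_iff']
  intro s g hsum i hi
  set Pr := (Fintype.card ↥L : ℂ)⁻¹ • ∑ l : ↥L, (ψ (ω l (Quotient.out i)))⁻¹ • P.π ((l : V), 0) with hPr
  have happ := congrArg (fun x => Pr x) hsum
  simp only [map_sum, map_smul, map_zero] at happ
  have hterm : ∀ x : V ⧸ L, Pr (eVec P L (Quotient.out x)) = if x = i then eVec P L (Quotient.out i) else 0 := by
    intro x
    rw [hPr, eVec_proj P L hq halt hnd hψ hL1 hL2]
    rw [mk_out_eq, mk_out_eq]
    by_cases h : x = i
    · rw [if_pos h, if_pos h, h]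
    · rw [if_neg h, if_neg h]
  rw [Finset.sum_congr rfl (fun x _ => by rw [hterm x, smul_ite, smul_zero])] at happ
  rw [Finset.sum_ite_eq' s i (fun x => g x • eVec P L (Quotient.out i))] at happ
  rw [if_pos hi] at happ
  rcases smul_eq_zero.mp happ with h | h
  · exact h
  · exact absurd h (eVec_ne P hq halt hnd hψ L hL1 _)

lemma eVec_span_out (hq : Odd (Fintype.card F)) (halt : ∀ v : V, ω v v = 0)
    (hnd : ∀ v : V, (∀ u : V, ω v u = 0) → v = 0) (hψ : ψ ≠ 1)
    (hL1 : ∀ x ∈ L, ∀ y ∈ L, ω x y = 0) :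
    ⊤ ≤ Submodule.span ℂ (Set.range fun x : V ⧸ L => eVec P L (Quotient.out x)) := by
  rw [← eVec_span P hq halt hnd hψ L hL1]
  rw [Submodule.span_le]
  rintro _ ⟨v, rfl⟩
  rw [eVec_decomp P L hq halt hnd hψ hL1 v]
  exact Submodule.smul_mem _ _
    (Submodule.subset_span ⟨Submodule.Quotient.mk v, rfl⟩)

lemma exists_T (hq : Odd (Fintype.card F)) (halt : ∀ v : V, ω v v = 0)
    (hnd : ∀ v : V, (∀ u : V, ω v u = 0) → v = 0) (hψ : ψ ≠ 1)
    (hL1 : ∀ x ∈ L, ∀ y ∈ L, ω x y = 0)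
    (hL2 : ∀ v, (∀ x ∈ L, ω x v = 0) → v ∈ L)
    (g : V ≃ₗ[F] V) (hgsymp : ∀ u v : V, ω (g u) (g v) = ω u v)
    (L'' : Submodule F V) (hL''1 : ∀ x ∈ L'', ∀ y ∈ L'', ω x y = 0)
    (hgL : ∀ l ∈ L, g l ∈ L'') :
    ∃ T : P.carrier →ₗ[ℂ] P.carrier, ∀ v : V, T (eVec P L v) = eVec P L'' (g v) := by
  haveI : Finite V := Module.finite_of_finite F
  haveI : Fintype ↥L := Fintype.ofFinite _
  let b : Module.Basis (V ⧸ L) ℂ P.carrier :=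
    Module.Basis.mk (eVec_indep P L hq halt hnd hψ hL1 hL2)
      (eVec_span_out P L hq halt hnd hψ hL1)
  refine ⟨b.constr ℂ (fun x => eVec P L'' (g (Quotient.out x))), ?_⟩
  intro v
  set r := Quotient.out (Submodule.Quotient.mk v : V ⧸ L) with hrdef
  have hbl : v - r ∈ L := sub_out_mem L v
  rw [eVec_decomp P L hq halt hnd hψ hL1 v, map_smul]
  have hb : eVec P L r = b (Submodule.Quotient.mk v) := by
    rw [Module.Basis.mk_apply]
  rw [hb, Module.Basis.constr_basis]
  have hv : g v = g r + g (v - r) := by rw [← map_add]; congr 1; abel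
  rw [hv, eVec_shift P hq halt hnd hψ L'' hL''1 (g r) (hgL _ hbl), hgsymp]

lemma finrank_carrier_pow (hq : Odd (Fintype.card F)) (halt : ∀ v : V, ω v v = 0)
    (hnd : ∀ v : V, (∀ u : V, ω v u = 0) → v = 0) (hψ : ψ ≠ 1)
    (hL1 : ∀ x ∈ L, ∀ y ∈ L, ω x y = 0)
    (hL2 : ∀ v, (∀ x ∈ L, ω x v = 0) → v ∈ L) :
    ∃ k : ℕ, Module.finrank ℂ P.carrier = Fintype.card F ^ k := by
  haveI : Finite V := Module.finite_of_finite F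
  haveI : Fintype ↥L := Fintype.ofFinite _
  haveI : Finite (V ⧸ L) := Finite.of_surjective _ (Submodule.Quotient.mk_surjective L)
  haveI : Fintype (V ⧸ L) := Fintype.ofFinite _
  let b : Module.Basis (V ⧸ L) ℂ P.carrier :=
    Module.Basis.mk (eVec_indep P L hq halt hnd hψ hL1 hL2)
      (eVec_span_out P L hq halt hnd hψ hL1)
  refine ⟨Module.finrank F (V ⧸ L), ?_⟩
  rw [Module.finrank_eq_card_basis b]
  exact Module.card_eq_pow_finrank

end Lag

section Schur

lemma intw_of_eVec (hq : Odd (Fintype.card F)) (halt : ∀ v : V, ω v v = 0)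
    (hnd : ∀ v : V, (∀ u : V, ω v u = 0) → v = 0) (hψ : ψ ≠ 1)
    (L : Submodule F V) (hL1 : ∀ x ∈ L, ∀ y ∈ L, ω x y = 0)
    (L'' : Submodule F V) (hL''1 : ∀ x ∈ L'', ∀ y ∈ L'', ω x y = 0)
    (g : V ≃ₗ[F] V) (hgsymp : ∀ u v : V, ω (g u) (g v) = ω u v)
    (T : P.carrier →ₗ[ℂ] P.carrier)
    (hT : ∀ v : V, T (eVec P L v) = eVec P L'' (g v)) :
    ∀ (w : V) (z : F), T * P.π (w, z) = P.π (g w, z) * T := by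
  intro w z
  apply LinearMap.ext_on (eVec_span P hq halt hnd hψ L hL1)
  rintro _ ⟨v, rfl⟩
  rw [Module.End.mul_apply, Module.End.mul_apply, pi_eVec, map_smul, hT, hT, pi_eVec,
    ← map_add g, hgsymp]

lemma bij_of_eVec (hq : Odd (Fintype.card F)) (halt : ∀ v : V, ω v v = 0)
    (hnd : ∀ v : V, (∀ u : V, ω v u = 0) → v = 0) (hψ : ψ ≠ 1)
    (L : Submodule F V) (hL1 : ∀ x ∈ L, ∀ y ∈ L, ω x y = 0)
    (L'' : Submodule F V) (hL''1 : ∀ x ∈ L'', ∀ y ∈ L'', ω x y = 0)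
    (g : V ≃ₗ[F] V)
    (T : P.carrier →ₗ[ℂ] P.carrier)
    (hT : ∀ v : V, T (eVec P L v) = eVec P L'' (g v)) :
    Function.Bijective T := by
  have hsurj : Function.Surjective T := by
    rw [← LinearMap.range_eq_top]
    rw [← top_le_iff, ← eVec_span P hq halt hnd hψ L'' hL''1, Submodule.span_le]
    rintro _ ⟨u, rfl⟩
    refine ⟨eVec P L (g.symm u), ?_⟩
    rw [hT, g.apply_symm_apply]
  exact ⟨LinearMap.injective_iff_surjective.mpr hsurj, hsurj⟩

lemma schur (hq : Odd (Fintype.card F)) (halt : ∀ v : V, ω v v = 0)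
    (hψ : ψ ≠ 1)
    (g : V ≃ₗ[F] V) (A B : P.carrier →ₗ[ℂ] P.carrier)
    (hA : ∀ (w : V) (z : F), A * P.π (w, z) = P.π (g w, z) * A)
    (hB : ∀ (w : V) (z : F), B * P.π (w, z) = P.π (g w, z) * B)
    (hBbij : Function.Bijective B) :
    ∃ μ : ℂ, A = μ • B := by
  haveI : Nontrivial P.carrier := pi_nontrivial P
  set Beq := LinearEquiv.ofBijective B hBbij with hBeq
  set Bi : P.carrier →ₗ[ℂ] P.carrier := Beq.symm.toLinearMap with hBi
  have hBiB : Bi * B = 1 := by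
    ext x
    show Beq.symm (B x) = x
    have : B x = Beq x := rfl
    rw [this, Beq.symm_apply_apply]
  have hBBi : B * Bi = 1 := by
    ext x
    show B (Beq.symm x) = x
    have : B (Beq.symm x) = Beq (Beq.symm x) := rfl
    rw [this, Beq.apply_symm_apply]
  have hBiComm : ∀ (w : V) (z : F), Bi * P.π (g w, z) = P.π (w, z) * Bi := by
    intro w z
    calc Bi * P.π (g w, z) = Bi * P.π (g w, z) * (B * Bi) := by rw [hBBi, mul_one]
      _ = Bi * (P.π (g w, z) * B) * Bi := by
            rw [← mul_assoc, mul_assoc Bi]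
      _ = Bi * (B * P.π (w, z)) * Bi := by rw [← hB]
      _ = (Bi * B) * P.π (w, z) * Bi := by rw [mul_assoc Bi B]
      _ = P.π (w, z) * Bi := by rw [hBiB, one_mul]
  set C := Bi * A with hC
  have hCcomm : ∀ (w : V) (z : F), C * P.π (w, z) = P.π (w, z) * C := by
    intro w z
    calc C * P.π (w, z) = Bi * (A * P.π (w, z)) := by rw [hC, mul_assoc]
      _ = Bi * (P.π (g w, z) * A) := by rw [hA]
      _ = (Bi * P.π (g w, z)) * A := by rw [mul_assoc]
      _ = (P.π (w, z) * Bi) * A := by rw [hBiComm]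
      _ = P.π (w, z) * C := by rw [hC, mul_assoc]
  obtain ⟨μ, hμ⟩ := Module.End.exists_eigenvalue (C : Module.End ℂ P.carrier)
  obtain ⟨x, hxmem, hx0⟩ := hμ.exists_hasEigenvector
  refine ⟨μ, ?_⟩
  have hCμ : C = μ • (1 : P.carrier →ₗ[ℂ] P.carrier) := by
    set U := LinearMap.ker (C - μ • (1 : P.carrier →ₗ[ℂ] P.carrier)) with hU
    have hUinv : ∀ h : V × F, ∀ y ∈ U, P.π h y ∈ U := by
      rintro ⟨w, z⟩ y hy
      rw [hU, LinearMap.mem_ker] at hy ⊢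
      have hcy : C (P.π (w, z) y) = P.π (w, z) (C y) := by
        have := congrArg (fun f => f y) (hCcomm w z)
        simpa only [Module.End.mul_apply] using this
      rw [LinearMap.sub_apply, LinearMap.smul_apply, Module.End.one_apply] at hy ⊢
      rw [hcy, ← map_smul, ← map_sub, hy, map_zero]
    rcases P.irred U hUinv with h | h
    · exfalso
      have hxU : x ∈ U := by
        rw [hU, LinearMap.mem_ker, LinearMap.sub_apply, LinearMap.smul_apply,
          Module.End.one_apply]
        rw [Module.End.mem_eigenspace_iff] at hxmem
        rw [hxmem, sub_self]
      rw [h, Submodule.mem_bot] at hxU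
      exact hx0 hxU
    · ext y
      have hyU : y ∈ U := by rw [h]; trivial
      rw [hU, LinearMap.mem_ker, LinearMap.sub_apply, LinearMap.smul_apply,
        Module.End.one_apply, sub_eq_zero] at hyU
      simpa using hyU
  calc A = (B * Bi) * A := by rw [hBBi, one_mul]
    _ = B * C := by rw [hC, mul_assoc]
    _ = B * (μ • 1) := by rw [hCμ]
    _ = μ • B := by rw [mul_smul_comm, mul_one]

lemma scalar_ne_zero (A B : P.carrier →ₗ[ℂ] P.carrier) (μ : ℂ)
    (hAbij : Function.Bijective A) (h : A = μ • B) : μ ≠ 0 := by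
  haveI : Nontrivial P.carrier := pi_nontrivial P
  intro h0
  rw [h0, zero_smul] at h
  obtain ⟨x, hx⟩ := exists_ne (0 : P.carrier)
  apply hx
  apply hAbij.1
  rw [h]
  simp

end Schur
end PiCalc

section InvLag

lemma mem_symp_iff {g : V ≃ₗ[F] V} :
    g ∈ Symp F V ω ↔ ∀ u v : V, ω (g u) (g v) = ω u v := Iff.rfl

/-- the `ω`-perp of a submodule -/
def wperp (ω : LinearMap.BilinForm F V) (L : Submodule F V) : Submodule F V where
  carrier := {v | ∀ x ∈ L, ω x v = 0}
  add_mem' := by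
    intro a b ha hb x hx
    rw [map_add, ha x hx, hb x hx, add_zero]
  zero_mem' := by intro x hx; rw [map_zero]
  smul_mem' := by
    intro c a ha x hx
    rw [map_smul, ha x hx, smul_zero]

lemma mem_wperp {L : Submodule F V} {v : V} :
    v ∈ wperp ω L ↔ ∀ x ∈ L, ω x v = 0 := Iff.rfl

lemma exists_invariant_lagrangian (halt : ∀ v : V, ω v v = 0)
    (U : Subgroup ↥(Symp F V ω)) {p : ℕ} [Fact p.Prime]
    (hU : IsPGroup p ↥U) (hp : p ∣ Fintype.card F) :
    ∃ L : Submodule F V, (∀ x ∈ L, ∀ y ∈ L, ω x y = 0) ∧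
      (∀ v, (∀ x ∈ L, ω x v = 0) → v ∈ L) ∧
      (∀ g : ↥(Symp F V ω), g ∈ U →
        L.map ((g : V ≃ₗ[F] V) : V →ₗ[F] V) = L) := by
  classical
  haveI : Finite V := Module.finite_of_finite F
  set Pk : ℕ → Prop := fun k => ∃ L : Submodule F V,
    (∀ x ∈ L, ∀ y ∈ L, ω x y = 0) ∧
    (∀ g : ↥(Symp F V ω), g ∈ U → L.map ((g : V ≃ₗ[F] V) : V →ₗ[F] V) = L) ∧
    Module.finrank F ↥L = k with hPk
  have hP0 : Pk 0 := by
    refine ⟨⊥, ?_, ?_, ?_⟩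
    · intro x hx
      rw [Submodule.mem_bot] at hx
      subst hx
      intro y _
      rw [map_zero]
      rfl
    · intro g _
      exact Submodule.map_bot _
    · exact finrank_bot F V
  set k := Nat.findGreatest Pk (Module.finrank F V) with hk
  have hPkk : Pk k := Nat.findGreatest_spec (Nat.zero_le _) hP0
  obtain ⟨L, hiso, hinv, hrank⟩ := hPkk
  refine ⟨L, hiso, ?_, hinv⟩
  by_contra hcon
  push_neg at hcon
  obtain ⟨v0, hv0perp, hv0notin⟩ := hcon
  -- the quotient image of the perp
  set N : Submodule F (V ⧸ L) := (wperp ω L).map L.mkQ with hN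
  -- linear action of U on V ⧸ L
  have hgle : ∀ g : ↥(Symp F V ω), g ∈ U →
      L ≤ L.comap ((g : V ≃ₗ[F] V) : V →ₗ[F] V) := by
    intro g hg x hx
    have : ((g : V ≃ₗ[F] V) : V →ₗ[F] V) x ∈ L.map ((g : V ≃ₗ[F] V) : V →ₗ[F] V) :=
      Submodule.mem_map_of_mem hx
    rwa [hinv g hg] at this
  set qmap : ↥U → (V ⧸ L) →ₗ[F] (V ⧸ L) := fun g =>
    Submodule.mapQ L L ((((g : ↥(Symp F V ω)) : V ≃ₗ[F] V)) : V →ₗ[F] V)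
      (hgle g g.2) with hqmap
  have hqmk : ∀ (g : ↥U) (w : V),
      qmap g (Submodule.Quotient.mk w) =
      Submodule.Quotient.mk (((g : ↥(Symp F V ω)) : V ≃ₗ[F] V) w) := by
    intro g w
    simp only [hqmap]
    exact Submodule.mapQ_apply L L _ w
  -- perp is invariant
  have hperpinv : ∀ (g : ↥(Symp F V ω)), g ∈ U → ∀ w ∈ wperp ω L,
      (g : V ≃ₗ[F] V) w ∈ wperp ω L := by
    intro g hg w hw x hx
    have hx' : x ∈ L.map ((g : V ≃ₗ[F] V) : V →ₗ[F] V) := by rw [hinv g hg]; exact hx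
    obtain ⟨l, hl, rfl⟩ := hx'
    have := g.2
    rw [mem_symp_iff] at this
    rw [LinearEquiv.coe_coe]
    rw [this l w]
    exact hw l hl
  -- qmap of an inverse element undoes qmap
  have hqzero : ∀ (g : ↥U) (y : V ⧸ L), qmap g y = 0 → y = 0 := by
    intro g y h0
    obtain ⟨w, rfl⟩ := Submodule.Quotient.mk_surjective L y
    rw [hqmk] at h0
    rw [Submodule.Quotient.mk_eq_zero] at h0 ⊢
    set e : V ≃ₗ[F] V := ((g : ↥(Symp F V ω)) : V ≃ₗ[F] V) with he
    have hww : e⁻¹ (e w) = w := by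
      have h1 : (e⁻¹ * e) w = w := by rw [inv_mul_cancel]; rfl
      exact h1
    have hmapinv := hinv ((g : ↥(Symp F V ω))⁻¹) (U.inv_mem (SetLike.coe_mem g))
    have hcoe : (((g : ↥(Symp F V ω))⁻¹ : ↥(Symp F V ω)) : V ≃ₗ[F] V) = e⁻¹ := rfl
    rw [hcoe] at hmapinv
    have : e⁻¹ (e w) ∈ L.map (e⁻¹ : V ≃ₗ[F] V).toLinearMap :=
      Submodule.mem_map_of_mem h0
    rw [hmapinv] at this
    rwa [hww] at this
  -- the set of nonzero elements of N, as a U-set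
  set S := {y : ↥N // y ≠ 0} with hS
  haveI : Finite (V ⧸ L) := Finite.of_surjective _ (Submodule.Quotient.mk_surjective L)
  have hmemN : ∀ (g : ↥U) (y : ↥N), qmap g (y : V ⧸ L) ∈ N := by
    intro g y
    obtain ⟨w, hw, hwx⟩ := Submodule.mem_map.mp y.2
    rw [← hwx, Submodule.mkQ_apply, hqmk]
    have h1 : ((g : ↥(Symp F V ω)) : V ≃ₗ[F] V) w ∈ wperp ω L :=
      hperpinv _ (SetLike.coe_mem g) w hw
    have h2 := Submodule.mem_map_of_mem (f := L.mkQ) h1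
    rwa [Submodule.mkQ_apply] at h2
  letI : SMul ↥U S := ⟨fun g y => ⟨⟨qmap g (y.1 : V ⧸ L), hmemN g y.1⟩, by
    intro h0
    apply y.2
    apply Subtype.ext
    have h1 : qmap g (y.1 : V ⧸ L) = 0 := by
      have := congrArg (fun t : ↥N => (t : V ⧸ L)) h0
      simpa using this
    exact hqzero g _ h1⟩⟩
  have hsmul_def : ∀ (g : ↥U) (y : S), ((g • y : S) : ↥N) = ⟨qmap g (y.1 : V ⧸ L), hmemN g y.1⟩ := fun g y => rfl
  letI : MulAction ↥U S :=
    { one_smul := fun y => by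
        apply Subtype.ext
        apply Subtype.ext
        show qmap 1 (y.1 : V ⧸ L) = (y.1 : V ⧸ L)
        obtain ⟨w, hw⟩ := Submodule.Quotient.mk_surjective L (y.1 : V ⧸ L)
        rw [← hw, hqmk]
        rfl
      mul_smul := fun g h y => by
        apply Subtype.ext
        apply Subtype.ext
        show qmap (g * h) (y.1 : V ⧸ L) = qmap g (qmap h (y.1 : V ⧸ L))
        obtain ⟨w, hw⟩ := Submodule.Quotient.mk_surjective L (y.1 : V ⧸ L)
        rw [← hw, hqmk, hqmk, hqmk]
        rfl }
  -- cardinality of S is prime to p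
  haveI : Fintype ↥N := Fintype.ofFinite _
  have hmkv0 : Submodule.Quotient.mk v0 ∈ N := by
    rw [hN]
    have h2 := Submodule.mem_map_of_mem (f := L.mkQ) (show v0 ∈ wperp ω L from hv0perp)
    rwa [Submodule.mkQ_apply] at h2
  have hmkv0ne : (⟨Submodule.Quotient.mk v0, hmkv0⟩ : ↥N) ≠ 0 := by
    intro h
    apply hv0notin
    have := congrArg (fun t : ↥N => (t : V ⧸ L)) h
    simp only at this
    rwa [← Submodule.Quotient.mk_eq_zero L]
  have hcardN : p ∣ Fintype.card ↥N := by
    haveI : Nontrivial ↥N := ⟨⟨⟨Submodule.Quotient.mk v0, hmkv0⟩, 0, hmkv0ne⟩⟩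
    have h1 : Fintype.card ↥N = Fintype.card F ^ Module.finrank F ↥N :=
      Module.card_eq_pow_finrank
    have h2 : 0 < Module.finrank F ↥N := Module.finrank_pos
    calc p ∣ Fintype.card F := hp
      _ ∣ Fintype.card F ^ Module.finrank F ↥N := dvd_pow_self _ h2.ne'
      _ = Fintype.card ↥N := h1.symm
  have hcardS : ¬ p ∣ Nat.card S := by
    haveI : Fintype S := Fintype.ofFinite _
    rw [Nat.card_eq_fintype_card]
    have h1 : Fintype.card S = Fintype.card ↥N - 1 := by
      have e : S ≃ {y : ↥N // ¬ (y = 0)} := Equiv.refl _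
      rw [Fintype.card_congr e, Fintype.card_subtype_compl,
        Fintype.card_subtype_eq (0 : ↥N)]
    rw [h1]
    intro hdvd
    have h2 := Nat.dvd_sub hcardN hdvd
    have h3 : 0 < Fintype.card ↥N := Fintype.card_pos
    have h4 : Fintype.card ↥N - (Fintype.card ↥N - 1) = 1 := by omega
    rw [h4] at h2
    exact (Fact.out : p.Prime).ne_one (Nat.dvd_one.mp h2)
  -- fixed point
  obtain ⟨y, hy⟩ := hU.nonempty_fixed_point_of_prime_not_dvd_card S hcardS
  rw [MulAction.mem_fixedPoints] at hy
  obtain ⟨w, hwperp, hmkw⟩ := Submodule.mem_map.mp y.1.2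
  rw [Submodule.mkQ_apply] at hmkw
  have hwnotL : w ∉ L := by
    intro hwL
    apply y.2
    apply Subtype.ext
    show (y.1 : V ⧸ L) = 0
    rw [← hmkw, Submodule.Quotient.mk_eq_zero]
    exact hwL
  have hgw : ∀ (g : ↥(Symp F V ω)), g ∈ U → (g : V ≃ₗ[F] V) w - w ∈ L := by
    intro g hg
    have h1 := hy ⟨g, hg⟩
    have h2 : qmap ⟨g, hg⟩ (y.1 : V ⧸ L) = (y.1 : V ⧸ L) := by
      have h3 := congrArg (fun s : S => (s.1 : V ⧸ L)) h1
      exact h3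
    rw [← hmkw, hqmk] at h2
    rw [← Submodule.Quotient.eq]
    exact h2
  -- bigger invariant isotropic submodule
  set L' := L ⊔ Submodule.span F {w} with hL'
  have hwL' : w ∈ L' := Submodule.mem_sup_right (Submodule.mem_span_singleton_self w)
  have hiso' : ∀ x ∈ L', ∀ y ∈ L', ω x y = 0 := by
    intro x hx y hy'
    rw [hL', Submodule.mem_sup] at hx hy'
    obtain ⟨a, ha, s, hs, rfl⟩ := hx
    obtain ⟨b, hb, t, ht, rfl⟩ := hy'
    obtain ⟨c, rfl⟩ := Submodule.mem_span_singleton.mp hs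
    obtain ⟨c', rfl⟩ := Submodule.mem_span_singleton.mp ht
    have h1 : ω a b = 0 := hiso a ha b hb
    have h2 : ω a w = 0 := hwperp a ha
    have h3 : ω w b = 0 := by
      rw [omega_skew halt w b, hwperp b hb, neg_zero]
    have h4 : ω w w = 0 := halt w
    simp only [map_add, map_smul, LinearMap.add_apply, LinearMap.smul_apply,
      smul_eq_mul, h1, h2, h3, h4]
    ring
  have hinv' : ∀ g : ↥(Symp F V ω), g ∈ U →
      L'.map ((g : V ≃ₗ[F] V) : V →ₗ[F] V) = L' := by
    intro g hg
    rw [hL', Submodule.map_sup, hinv g hg, Submodule.map_span]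
    rw [Set.image_singleton]
    have hgww : (g : V ≃ₗ[F] V) w - w ∈ L := hgw g hg
    apply le_antisymm
    · apply sup_le le_sup_left
      rw [Submodule.span_le, Set.singleton_subset_iff, SetLike.mem_coe]
      have hmem : ((g : V ≃ₗ[F] V) w - w) + w ∈ L ⊔ Submodule.span F {w} :=
        Submodule.add_mem _ (Submodule.mem_sup_left hgww)
          (Submodule.mem_sup_right (Submodule.mem_span_singleton_self w))
      have heq : ((g : V ≃ₗ[F] V) w - w) + w = ((g : V ≃ₗ[F] V) : V →ₗ[F] V) w := by
        rw [sub_add_cancel]; rfl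
      rwa [heq] at hmem
    · apply sup_le le_sup_left
      rw [Submodule.span_le, Set.singleton_subset_iff, SetLike.mem_coe]
      have hmem : ((g : V ≃ₗ[F] V) : V →ₗ[F] V) w - ((g : V ≃ₗ[F] V) w - w)
          ∈ L ⊔ Submodule.span F {((g : V ≃ₗ[F] V) : V →ₗ[F] V) w} :=
        Submodule.sub_mem _
          (Submodule.mem_sup_right (Submodule.mem_span_singleton_self _))
          (Submodule.mem_sup_left hgww)
      have heq : ((g : V ≃ₗ[F] V) : V →ₗ[F] V) w - ((g : V ≃ₗ[F] V) w - w) = w := by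
        rw [show ((g : V ≃ₗ[F] V) : V →ₗ[F] V) w = (g : V ≃ₗ[F] V) w from rfl,
          sub_sub_cancel]
      rwa [heq] at hmem
  have hlt : L < L' := lt_of_le_of_ne le_sup_left (by
    intro h
    rw [← h] at hwL'
    exact hwnotL hwL')
  have hfr : Module.finrank F ↥L < Module.finrank F ↥L' :=
    Submodule.finrank_lt_finrank_of_lt hlt
  have hPk' : Pk (Module.finrank F ↥L') := ⟨L', hiso', hinv', rfl⟩
  have hgt : k < Module.finrank F ↥L' := by rw [← hrank]; exact hfr
  exact Nat.findGreatest_is_greatest hgt (Submodule.finrank_le L') hPk'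

section Helpers
variable (P : HeisenbergRep F V ω ψ)

lemma bij_ne_zero (A : P.carrier →ₗ[ℂ] P.carrier) (hA : Function.Bijective A) :
    A ≠ 0 := by
  haveI : Nontrivial P.carrier := pi_nontrivial P
  intro h
  obtain ⟨x, hx⟩ := exists_ne (0 : P.carrier)
  apply hx
  apply hA.1
  rw [h]
  simp

lemma smul_cancel {a b : ℂ} {A : P.carrier →ₗ[ℂ] P.carrier} (hA : A ≠ 0)
    (h : a • A = b • A) : a = b := by
  have h1 : (a - b) • A = 0 := by rw [sub_smul, h, sub_self]
  rcases smul_eq_zero.mp h1 with h2 | h2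
  · exact sub_eq_zero.mp h2
  · exact absurd h2 hA

lemma bij_smul (a : ℂ) (ha : a ≠ 0) (A : P.carrier →ₗ[ℂ] P.carrier)
    (hA : Function.Bijective A) : Function.Bijective (a • A) := by
  constructor
  · intro x y hxy
    apply hA.1
    have h1 : a • A x = a • A y := by
      simpa only [LinearMap.smul_apply] using hxy
    exact smul_right_injective P.carrier ha h1
  · intro y
    obtain ⟨x, hx⟩ := hA.2 (a⁻¹ • y)
    refine ⟨x, ?_⟩
    show a • A x = y
    rw [hx, smul_smul, mul_inv_cancel₀ ha, one_smul]

lemma intw_comp (A B : P.carrier →ₗ[ℂ] P.carrier) (a b : V ≃ₗ[F] V)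
    (hA : ∀ (w : V) (z : F), A * P.π (w, z) = P.π (a w, z) * A)
    (hB : ∀ (w : V) (z : F), B * P.π (w, z) = P.π (b w, z) * B)
    (w : V) (z : F) :
    (A * B) * P.π (w, z) = P.π (a (b w), z) * (A * B) := by
  rw [mul_assoc, hB, ← mul_assoc, hA, mul_assoc]

end Helpers
end InvLag
end Weil


set_option maxHeartbeats 2000000 in
/-- **Linearization of the Weil representation.** For every irreducible complex
representation `(π, H)` of the Heisenberg group `H(V,ω)` with central character `ψ`
there is a group homomorphism `ρ : Sp(V,ω) → GL(H)` satisfying the Egorov identity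
`ρ(g) π(v,z) ρ(g)⁻¹ = π(gv, z)` for every `g ∈ Sp(V,ω)` and `(v,z) ∈ H(V,ω)`. -/
theorem weil_representation_linearization
    (n : ℕ) [FiniteDimensional F V] (hdim : Module.finrank F V = 2 * n)
    (hq : Odd (Fintype.card F))
    (ω : LinearMap.BilinForm F V)
    (halt : ∀ v : V, ω v v = 0)
    (hnd : ∀ v : V, (∀ u : V, ω v u = 0) → v = 0)
    (ψ : AddChar F ℂ) (hψ : ψ ≠ 1)
    (P : HeisenbergRep F V ω ψ) :
    ∃ ρ : ↥(Symp F V ω) →* (P.carrier ≃ₗ[ℂ] P.carrier),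
      ∀ (g : ↥(Symp F V ω)) (v : V) (z : F),
        ((ρ g).toLinearMap ∘ₗ P.π (v, z)) ∘ₗ (ρ g).symm.toLinearMap
          = P.π ((g : V ≃ₗ[F] V) v, z) := by
  classical
  haveI : Finite V := Module.finite_of_finite F
  haveI : Nontrivial P.carrier := pi_nontrivial P
  haveI : Finite (V ≃ₗ[F] V) :=
    Finite.of_injective (fun e => (⇑e : V → V))
      (fun e f h => by
        apply LinearEquiv.toLinearMap_injective
        apply LinearMap.ext
        intro x
        exact congrFun h x)
  -- characteristic
  set p := ringChar F with hpdef
  haveI : CharP F p := ringChar.charP F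
  obtain ⟨s, hp_prime, hcardF⟩ := FiniteField.card F p
  haveI : Fact p.Prime := ⟨hp_prime⟩
  have hpdvd : p ∣ Fintype.card F := by
    rw [hcardF]; exact dvd_pow_self p s.pos.ne'
  -- Sylow subgroup and invariant Lagrangian
  obtain ⟨U⟩ : Nonempty (Sylow p ↥(Symp F V ω)) := Sylow.nonempty
  obtain ⟨L, hL1, hL2, hLinv⟩ :=
    exists_invariant_lagrangian halt (↑U : Subgroup ↥(Symp F V ω)) U.isPGroup' hpdvd
  -- coercion to linear maps
  set lin : ↥(Symp F V ω) → (V →ₗ[F] V) :=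
    fun g => ((g : V ≃ₗ[F] V) : V →ₗ[F] V) with hlin
  have gsymp : ∀ g : ↥(Symp F V ω), ∀ u v : V,
      ω ((g : V ≃ₗ[F] V) u) ((g : V ≃ₗ[F] V) v) = ω u v :=
    fun g => (mem_symp_iff).mp (SetLike.coe_mem g)
  have hlin_inv_comp : ∀ a : ↥(Symp F V ω), (lin a⁻¹).comp (lin a) = LinearMap.id := by
    intro a
    apply LinearMap.ext
    intro x
    show ((a⁻¹ : ↥(Symp F V ω)) : V ≃ₗ[F] V) ((a : V ≃ₗ[F] V) x) = x
    have h1 : ((a : V ≃ₗ[F] V)⁻¹ * (a : V ≃ₗ[F] V)) x = x := by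
      rw [inv_mul_cancel]; rfl
    exact h1
  -- stabilizer of L
  set Q : Subgroup ↥(Symp F V ω) :=
    { carrier := {g | L.map (lin g) = L}
      one_mem' := by
        show L.map (lin 1) = L
        have h1 : lin 1 = LinearMap.id := rfl
        rw [h1, Submodule.map_id]
      mul_mem' := by
        intro a b ha hb
        show L.map (lin (a * b)) = L
        have h1 : lin (a * b) = (lin a).comp (lin b) := rfl
        rw [h1, Submodule.map_comp]
        rw [show L.map (lin b) = L from hb]
        exact ha
      inv_mem' := by
        intro a ha
        show L.map (lin a⁻¹) = L
        calc L.map (lin a⁻¹) = (L.map (lin a)).map (lin a⁻¹) := by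
              rw [show L.map (lin a) = L from ha]
          _ = L.map ((lin a⁻¹).comp (lin a)) := by rw [← Submodule.map_comp]
          _ = L := by rw [hlin_inv_comp a, Submodule.map_id] } with hQ
  have hUQ : (↑U : Subgroup ↥(Symp F V ω)) ≤ Q := fun g hg => hLinv g hg
  -- index and dimension are coprime
  haveI : (↑U : Subgroup ↥(Symp F V ω)).FiniteIndex := ⟨Subgroup.index_ne_zero_of_finite⟩
  have hpUind : ¬ p ∣ (↑U : Subgroup ↥(Symp F V ω)).index := U.not_dvd_index
  have hpm : ¬ p ∣ Q.index := fun hdvd =>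
    hpUind (hdvd.trans (Subgroup.index_dvd_of_le hUQ))
  set m := Q.index with hm
  set d := Module.finrank ℂ P.carrier with hd
  have hcop : Nat.Coprime m d := by
    obtain ⟨k, hk⟩ := finrank_carrier_pow P L hq halt hnd hψ hL1 hL2
    have h1 : d = p ^ ((s : ℕ) * k) := by
      rw [hd, hk, hcardF, pow_mul]
    have h2 : Nat.Coprime p m := (hp_prime.coprime_iff_not_dvd).mpr hpm
    have h3 : Nat.Coprime (p ^ ((s:ℕ) * k)) m := h2.pow_left _
    rw [h1]
    exact h3.symm
  have hmne : m ≠ 0 := Subgroup.index_ne_zero_of_finite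
  have hdne0 : d ≠ 0 := by
    have := Module.finrank_pos (R := ℂ) (M := P.carrier)
    omega
  -- the intertwiners
  have hmapiso : ∀ g : ↥(Symp F V ω), ∀ x ∈ L.map (lin g), ∀ y ∈ L.map (lin g),
      ω x y = 0 := by
    intro g x hx y hy
    obtain ⟨a, ha, rfl⟩ := hx
    obtain ⟨b, hb, rfl⟩ := hy
    show ω ((g : V ≃ₗ[F] V) a) ((g : V ≃ₗ[F] V) b) = 0
    rw [gsymp g]
    exact hL1 a ha b hb
  have hTex : ∀ g : ↥(Symp F V ω), ∃ T : P.carrier →ₗ[ℂ] P.carrier,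
      ∀ v : V, T (eVec P L v) = eVec P (L.map (lin g)) ((g : V ≃ₗ[F] V) v) :=
    fun g => exists_T P L hq halt hnd hψ hL1 hL2 (g : V ≃ₗ[F] V) (gsymp g)
      (L.map (lin g)) (hmapiso g) (fun l hl => Submodule.mem_map_of_mem hl)
  choose T hT using hTex
  have hTint : ∀ g : ↥(Symp F V ω), ∀ (w : V) (z : F),
      T g * P.π (w, z) = P.π ((g : V ≃ₗ[F] V) w, z) * T g :=
    fun g => intw_of_eVec P hq halt hnd hψ L hL1 (L.map (lin g)) (hmapiso g)
      (g : V ≃ₗ[F] V) (gsymp g) (T g) (hT g)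
  have hTbij : ∀ g, Function.Bijective (T g) :=
    fun g => bij_of_eVec P hq halt hnd hψ L hL1 (L.map (lin g)) (hmapiso g)
      (g : V ≃ₗ[F] V) (T g) (hT g)
  have hTne : ∀ g, T g ≠ 0 := fun g => bij_ne_zero P (T g) (hTbij g)
  have hTQ : ∀ g : ↥(Symp F V ω), g ∈ Q → ∀ v : V,
      T g (eVec P L v) = eVec P L ((g : V ≃ₗ[F] V) v) := by
    intro g hg v
    have h1 := hT g v
    have h2 : L.map (lin g) = L := hg
    rw [h2] at h1
    exact h1
  have hTmulQ : ∀ g h' : ↥(Symp F V ω), g ∈ Q → h' ∈ Q →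
      T g * T h' = T (g * h') := by
    intro g h' hg hh'
    apply LinearMap.ext_on (eVec_span P hq halt hnd hψ L hL1)
    rintro _ ⟨v, rfl⟩
    rw [Module.End.mul_apply, hTQ h' hh' v, hTQ g hg, hTQ (g * h') (Q.mul_mem hg hh')]
    rfl
  -- the cocycle
  have hcex : ∀ g h' : ↥(Symp F V ω), ∃ μ : ℂ,
      (T g * T h' = μ • T (g * h')) ∧ μ ≠ 0 := by
    intro g h'
    have hA : ∀ (w : V) (z : F), (T g * T h') * P.π (w, z)
        = P.π (((g * h' : ↥(Symp F V ω)) : V ≃ₗ[F] V) w, z) * (T g * T h') :=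
      fun w z => intw_comp P (T g) (T h') (g : V ≃ₗ[F] V) (h' : V ≃ₗ[F] V)
        (hTint g) (hTint h') w z
    obtain ⟨μ, hμ⟩ := schur P hq halt hψ ((g * h' : ↥(Symp F V ω)) : V ≃ₗ[F] V)
      (T g * T h') (T (g * h')) hA (hTint (g * h')) (hTbij (g * h'))
    have hbijA : Function.Bijective (T g * T h') := (hTbij g).comp (hTbij h')
    exact ⟨μ, hμ, scalar_ne_zero P _ _ μ hbijA hμ⟩
  choose c hc1 hc2 using hcex
  -- coset machinery
  haveI : Fintype (↥(Symp F V ω) ⧸ Q) := Fintype.ofFinite _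
  have hmcard : m = Fintype.card (↥(Symp F V ω) ⧸ Q) := by
    rw [hm, Subgroup.index_eq_card, Nat.card_eq_fintype_card]
  set rep : (↥(Symp F V ω) ⧸ Q) → ↥(Symp F V ω) := fun x => Quotient.out x with hrepdef
  have hrepeq : ∀ x : ↥(Symp F V ω) ⧸ Q, (↑(rep x) : ↥(Symp F V ω) ⧸ Q) = x :=
    fun x => QuotientGroup.out_eq' x
  set qel : ↥(Symp F V ω) → (↥(Symp F V ω) ⧸ Q) → ↥(Symp F V ω) :=
    fun g x => (rep (g • x))⁻¹ * g * rep x with hqel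
  have hqelmem : ∀ g x, qel g x ∈ Q := by
    intro g x
    have h1 : (↑(rep (g • x)) : ↥(Symp F V ω) ⧸ Q) = ↑(g * rep x) := by
      rw [hrepeq]
      show g • x = ↑(g * rep x)
      have h2 : (↑(g * rep x) : ↥(Symp F V ω) ⧸ Q) = g • ↑(rep x) := rfl
      rw [h2, hrepeq]
    have h3 := (QuotientGroup.eq).mp h1
    simpa [hqel, mul_assoc] using h3
  have hqelkey : ∀ g x, rep (g • x) * qel g x = g * rep x := by
    intro g x
    simp only [hqel]
    group
  -- scalars comparing T g * T (rep x) with the transferred product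
  have hzex : ∀ (g : ↥(Symp F V ω)) (x : ↥(Symp F V ω) ⧸ Q), ∃ μ : ℂ,
      (T g * T (rep x) = μ • (T (rep (g • x)) * T (qel g x))) ∧ μ ≠ 0 := by
    intro g x
    have hA : ∀ (w : V) (z : F), (T g * T (rep x)) * P.π (w, z)
        = P.π (((g * rep x : ↥(Symp F V ω)) : V ≃ₗ[F] V) w, z) * (T g * T (rep x)) :=
      fun w z => intw_comp P _ _ ((g : V ≃ₗ[F] V)) ((rep x : V ≃ₗ[F] V))
        (hTint g) (hTint (rep x)) w z
    have hB : ∀ (w : V) (z : F), (T (rep (g • x)) * T (qel g x)) * P.π (w, z)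
        = P.π (((g * rep x : ↥(Symp F V ω)) : V ≃ₗ[F] V) w, z)
          * (T (rep (g • x)) * T (qel g x)) := by
      intro w z
      have h1 := intw_comp P _ _ ((rep (g • x) : V ≃ₗ[F] V)) ((qel g x : V ≃ₗ[F] V))
        (hTint (rep (g • x))) (hTint (qel g x)) w z
      have h3 : ((rep (g • x) : V ≃ₗ[F] V)) ((qel g x : V ≃ₗ[F] V) w)
          = ((g * rep x : ↥(Symp F V ω)) : V ≃ₗ[F] V) w := by
        rw [← hqelkey g x]
        rfl
      rw [h1, h3]
    have hbijB : Function.Bijective (T (rep (g • x)) * T (qel g x)) :=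
      (hTbij (rep (g • x))).comp (hTbij (qel g x))
    have hbijA : Function.Bijective (T g * T (rep x)) :=
      (hTbij g).comp (hTbij (rep x))
    obtain ⟨μ, hμ⟩ := schur P hq halt hψ ((g * rep x : ↥(Symp F V ω)) : V ≃ₗ[F] V)
      (T g * T (rep x)) (T (rep (g • x)) * T (qel g x)) hA hB hbijB
    exact ⟨μ, hμ, scalar_ne_zero P _ _ μ hbijA hμ⟩
  choose zf hz1 hz2 using hzex
  -- the 2-cocycle identity for the z-scalars
  have hzkey : ∀ (g h' : ↥(Symp F V ω)) (x : ↥(Symp F V ω) ⧸ Q),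
      zf g (h' • x) * zf h' x = c g h' * zf (g * h') x := by
    intro g h' x
    have hsmulx : g • (h' • x) = (g * h') • x := (mul_smul g h' x).symm
    have hqelmul : qel g (h' • x) * qel h' x = qel (g * h') x := by
      simp only [hqel]
      rw [hsmulx]
      group
    have e1 : T g * (T h' * T (rep x))
        = (zf h' x * zf g (h' • x)) • (T (rep ((g * h') • x)) * T (qel (g * h') x)) := by
      calc T g * (T h' * T (rep x))
          = zf h' x • (T g * (T (rep (h' • x)) * T (qel h' x))) := by
            rw [hz1 h' x, mul_smul_comm]
        _ = zf h' x • ((T g * T (rep (h' • x))) * T (qel h' x)) := by rw [mul_assoc]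
        _ = zf h' x • ((zf g (h' • x) • (T (rep (g • (h' • x))) * T (qel g (h' • x)))) * T (qel h' x)) := by
            rw [hz1 g (h' • x)]
        _ = (zf h' x * zf g (h' • x)) • ((T (rep (g • (h' • x))) * T (qel g (h' • x))) * T (qel h' x)) := by
            rw [smul_mul_assoc, smul_smul]
        _ = (zf h' x * zf g (h' • x)) • (T (rep (g • (h' • x))) * (T (qel g (h' • x)) * T (qel h' x))) := by
            rw [mul_assoc]
        _ = (zf h' x * zf g (h' • x)) • (T (rep ((g * h') • x)) * T (qel (g * h') x)) := by
            rw [hTmulQ _ _ (hqelmem g (h' • x)) (hqelmem h' x), hqelmul, hsmulx]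
    have e2 : T g * (T h' * T (rep x))
        = (c g h' * zf (g * h') x) • (T (rep ((g * h') • x)) * T (qel (g * h') x)) := by
      calc T g * (T h' * T (rep x)) = (T g * T h') * T (rep x) := by rw [mul_assoc]
        _ = (c g h' • T (g * h')) * T (rep x) := by rw [hc1]
        _ = c g h' • (T (g * h') * T (rep x)) := by rw [smul_mul_assoc]
        _ = (c g h' * zf (g * h') x) • (T (rep ((g * h') • x)) * T (qel (g * h') x)) := by
            rw [hz1 (g * h') x, smul_smul]
    have hYbij : Function.Bijective (T (rep ((g * h') • x)) * T (qel (g * h') x)) :=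
      (hTbij (rep ((g * h') • x))).comp (hTbij (qel (g * h') x))
    have hYne : T (rep ((g * h') • x)) * T (qel (g * h') x) ≠ 0 :=
      bij_ne_zero P _ hYbij
    have h4 := smul_cancel P hYne (e1.symm.trans e2)
    rw [← h4]
    ring
  -- transfer: the m-th power of the cocycle is a coboundary
  set η : ↥(Symp F V ω) → ℂ := fun g => ∏ x : ↥(Symp F V ω) ⧸ Q, zf g x with hη
  have hηne : ∀ g, η g ≠ 0 := by
    intro g
    rw [hη]
    rw [Finset.prod_ne_zero_iff]
    exact fun x _ => hz2 g x
  have hηmul : ∀ g h', η g * η h' = c g h' ^ m * η (g * h') := by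
    intro g h'
    have h2 : ∏ x : ↥(Symp F V ω) ⧸ Q, (zf g (h' • x) * zf h' x)
        = ∏ x : ↥(Symp F V ω) ⧸ Q, (c g h' * zf (g * h') x) :=
      Finset.prod_congr rfl (fun x _ => hzkey g h' x)
    rw [Finset.prod_mul_distrib, Finset.prod_mul_distrib, Finset.prod_const,
      Finset.card_univ, ← hmcard] at h2
    have h3 : ∏ x : ↥(Symp F V ω) ⧸ Q, zf g (h' • x) = ∏ x : ↥(Symp F V ω) ⧸ Q, zf g x :=
      Fintype.prod_bijective (fun x => h' • x) (MulAction.bijective h') _ _ (fun x => rfl)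
    rw [h3] at h2
    exact h2
  -- determinants: the d-th power of the cocycle is a coboundary
  set δ : ↥(Symp F V ω) → ℂ := fun g => LinearMap.det (T g) with hδ
  have hδne : ∀ g, δ g ≠ 0 := by
    intro g
    have h1 : ((LinearEquiv.ofBijective (T g) (hTbij g) :
        P.carrier ≃ₗ[ℂ] P.carrier) : P.carrier →ₗ[ℂ] P.carrier) = T g := by
      apply LinearMap.ext
      intro x
      exact LinearEquiv.ofBijective_apply _ x
    have h2 := LinearEquiv.coe_det (LinearEquiv.ofBijective (T g) (hTbij g))
    rw [h1] at h2
    rw [hδ]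
    simp only []
    rw [← h2]
    exact Units.ne_zero _
  have hδmul : ∀ g h', δ g * δ h' = c g h' ^ d * δ (g * h') := by
    intro g h'
    have h1 : LinearMap.det (T g * T h') = LinearMap.det (T g) * LinearMap.det (T h') := by
      rw [Module.End.mul_eq_comp, LinearMap.det_comp]
    rw [hδ]
    simp only []
    rw [← h1, hc1 g h', LinearMap.det_smul, ← hd]
  -- Bezout combination
  set a : ℤ := Nat.gcdA m d with ha
  set b : ℤ := Nat.gcdB m d with hb
  have habz : (m : ℤ) * a + (d : ℤ) * b = 1 := by
    have h1 := Nat.gcd_eq_gcd_ab m d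
    rw [Nat.Coprime] at hcop
    rw [hcop] at h1
    exact_mod_cast h1.symm
  set u : ↥(Symp F V ω) → ℂ := fun g => η g ^ a * δ g ^ b with hu
  have hune : ∀ g, u g ≠ 0 := fun g =>
    mul_ne_zero (zpow_ne_zero a (hηne g)) (zpow_ne_zero b (hδne g))
  have hckey : ∀ g h', c g h' * u (g * h') = u g * u h' := by
    intro g h'
    have hc0 := hc2 g h'
    have e2 : (c g h') ^ ((m:ℤ) * a) = (η g * η h' / η (g * h')) ^ a := by
      rw [zpow_mul, zpow_natCast]
      congr 1
      rw [eq_div_iff (hηne (g * h'))]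
      first
      | linear_combination hηmul g h'
      | linear_combination -hηmul g h'
    have e3 : (c g h') ^ ((d:ℤ) * b) = (δ g * δ h' / δ (g * h')) ^ b := by
      rw [zpow_mul, zpow_natCast]
      congr 1
      rw [eq_div_iff (hδne (g * h'))]
      first
      | linear_combination hδmul g h'
      | linear_combination -hδmul g h'
    have e1 : c g h' = (η g * η h' / η (g * h')) ^ a * (δ g * δ h' / δ (g * h')) ^ b := by
      rw [← e2, ← e3, ← zpow_add₀ hc0, habz, zpow_one]
    calc c g h' * u (g * h')
        = ((η g) ^ a * (η h') ^ a * ((δ g) ^ b * (δ h') ^ b)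
            / ((η (g * h')) ^ a * (δ (g * h')) ^ b))
          * ((η (g * h')) ^ a * (δ (g * h')) ^ b) := by
          rw [e1, div_zpow, div_zpow, mul_zpow, mul_zpow, div_mul_div_comm]
      _ = (η g) ^ a * (η h') ^ a * ((δ g) ^ b * (δ h') ^ b) := by
          rw [div_mul_cancel₀]
          exact mul_ne_zero (zpow_ne_zero _ (hηne _)) (zpow_ne_zero _ (hδne _))
      _ = u g * u h' := by rw [hu]; ring
  -- the normalized operators
  set ρ0 : ↥(Symp F V ω) → (P.carrier →ₗ[ℂ] P.carrier) := fun g => (u g)⁻¹ • T g with hρ0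
  have hρ0mul : ∀ g h', ρ0 g * ρ0 h' = ρ0 (g * h') := by
    intro g h'
    rw [hρ0]
    simp only []
    rw [smul_mul_smul_comm, hc1 g h', smul_smul]
    congr 1
    have h1 := hckey g h'
    have h2 : u g ≠ 0 := hune g
    have h3 : u h' ≠ 0 := hune h'
    have h4 : u (g * h') ≠ 0 := hune (g * h')
    field_simp
    first
    | linear_combination h1
    | linear_combination -h1
    | linear_combination u (g * h') * h1
    | linear_combination -(u (g * h') * h1)
    | linear_combination u g * u h' * h1
    | linear_combination -(u g * u h' * h1)
  have hρ0bij : ∀ g, Function.Bijective (ρ0 g) :=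
    fun g => bij_smul P _ (inv_ne_zero (hune g)) (T g) (hTbij g)
  have hρ0int : ∀ (g : ↥(Symp F V ω)) (w : V) (z : F),
      ρ0 g * P.π (w, z) = P.π ((g : V ≃ₗ[F] V) w, z) * ρ0 g := by
    intro g w z
    rw [hρ0]
    simp only []
    rw [smul_mul_assoc, hTint g, mul_smul_comm]
  -- package as linear equivalences
  set ρfun : ↥(Symp F V ω) → (P.carrier ≃ₗ[ℂ] P.carrier) :=
    fun g => LinearEquiv.ofBijective (ρ0 g) (hρ0bij g) with hρfun
  have hρfun_apply : ∀ g x, ρfun g x = ρ0 g x :=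
    fun g x => LinearEquiv.ofBijective_apply _ x
  have hρmul : ∀ g h', ρfun (g * h') = ρfun g * ρfun h' := by
    intro g h'
    apply LinearEquiv.toLinearMap_injective
    apply LinearMap.ext
    intro x
    have h1 : (ρfun g * ρfun h') x = ρfun g (ρfun h' x) := rfl
    show ρfun (g * h') x = (ρfun g * ρfun h') x
    rw [h1, hρfun_apply, hρfun_apply, hρfun_apply]
    have h2 := congrArg (fun f => f x) (hρ0mul g h').symm
    simpa only [Module.End.mul_apply] using h2
  refine ⟨MonoidHom.mk' ρfun hρmul, ?_⟩
  intro g v z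
  apply LinearMap.ext
  intro x
  simp only [LinearMap.comp_apply, LinearEquiv.coe_coe]
  show ρfun g (P.π (v, z) ((ρfun g).symm x)) = P.π ((g : V ≃ₗ[F] V) v, z) x
  rw [hρfun_apply]
  have h2 := congrArg (fun f => f ((ρfun g).symm x)) (hρ0int g v z)
  simp only [Module.End.mul_apply] at h2
  rw [h2]
  congr 1
  rw [← hρfun_apply]
  exact LinearEquiv.apply_symm_apply _ x


end KRSup
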